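/- Let (x¹, x², u) and (x̂¹, x̂², û) be two trajectories of the system (ex-01), each satisfying x²(i) ≠ 0 and x¹(i) + x²(i) ≠ 0 for all i (and likewise for the hatted trajectory). If the output sequences agree, i.e. x¹(i)/x²(i) = x̂¹(i)/x̂²(i) for all i ∈ ℕ, then the trajectories coincide: x¹(i) = x̂¹(i), x²(i) = x̂²(i) and u(i) = û(i) for all i. In other words, the output y = x¹/x² determines the trajectory of (ex-01) uniquely on this domain. -/

import Mathlib

/-- Let `(x¹,x²,u)` and `(x̂¹,x̂²,û)` be two trajectories of the example system
(ex-01): `x¹(i+1) = (x¹(i)+x²(i))³ x²(i) u(i)`, `x²(i+1) = x²(i) u(i)`, each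
satisfying `x²(i) ≠ 0` and `x¹(i)+x²(i) ≠ 0` for all `i`.  If the outputs
agree, `x¹(i)/x²(i) = x̂¹(i)/x̂²(i)` for all `i`, then the trajectories
coincide: the output `y = x¹/x²` determines the trajectory of (ex-01)
uniquely on this domain. -/
theorem stmt_13 (x1 x2 u xh1 xh2 uh : ℕ → ℝ)
    (htraj : ∀ i, x1 (i + 1) = (x1 i + x2 i) ^ 3 * x2 i * u i ∧
      x2 (i + 1) = x2 i * u i)
    (htrajh : ∀ i, xh1 (i + 1) = (xh1 i + xh2 i) ^ 3 * xh2 i * uh i ∧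
      xh2 (i + 1) = xh2 i * uh i)
    (hx2 : ∀ i, x2 i ≠ 0) (hsum : ∀ i, x1 i + x2 i ≠ 0)
    (hxh2 : ∀ i, xh2 i ≠ 0) (hsumh : ∀ i, xh1 i + xh2 i ≠ 0)
    (hout : ∀ i, x1 i / x2 i = xh1 i / xh2 i) :
    ∀ i, x1 i = xh1 i ∧ x2 i = xh2 i ∧ u i = uh i := by
  -- u i ≠ 0 since x2 (i+1) = x2 i * u i ≠ 0
  have hu : ∀ i, u i ≠ 0 := by
    intro i hui
    exact hx2 (i + 1) (by rw [(htraj i).2, hui, mul_zero])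
  have huh : ∀ i, uh i ≠ 0 := by
    intro i hui
    exact hxh2 (i + 1) (by rw [(htrajh i).2, hui, mul_zero])
  -- sums agree: from output at i+1
  have hs : ∀ i, x1 i + x2 i = xh1 i + xh2 i := by
    intro i
    have h := hout (i + 1)
    rw [(htraj i).1, (htraj i).2, (htrajh i).1, (htrajh i).2] at h
    have h1 : (x1 i + x2 i) ^ 3 = (xh1 i + xh2 i) ^ 3 := by
      have hne : x2 i * u i * (xh2 i * uh i) ≠ 0 :=
        mul_ne_zero (mul_ne_zero (hx2 i) (hu i)) (mul_ne_zero (hxh2 i) (huh i))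
      field_simp [hx2 i, hxh2 i, hu i, huh i] at h
      apply mul_right_cancel₀ hne
      linear_combination (x2 i * u i * (xh2 i * uh i)) * h
    have hodd : Odd 3 := ⟨1, by norm_num⟩
    exact (Odd.strictMono_pow (R := ℝ) hodd).injective h1
  -- states agree
  have hstate : ∀ i, x1 i = xh1 i ∧ x2 i = xh2 i := by
    intro i
    have ho := hout i
    have hcross : x1 i * xh2 i = xh1 i * x2 i := by
      field_simp [hx2 i, hxh2 i] at ho
      linarith
    have hs' := hs i
    have h2 : x2 i = xh2 i := by
      have : (x1 i + x2 i) * xh2 i = (x1 i + x2 i) * x2 i := by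
        linear_combination hcross - x2 i * hs' 
      exact (mul_left_cancel₀ (hsum i) this).symm
    exact ⟨by linarith, h2⟩
  intro i
  refine ⟨(hstate i).1, (hstate i).2, ?_⟩
  have h1 := (htraj i).2
  have h2 := (htrajh i).2
  rw [← (hstate i).2, ← (hstate (i + 1)).2] at h2
  rw [h2] at h1
  exact mul_left_cancel₀ (hx2 i) h1.symm
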